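/- Every 2-tree on n ≥ 3 vertices admits a proper 3-coloring; consequently, some two color classes together contain at most ⌊2n/3⌋ vertices, and the union of any two color classes of such a coloring is a double dominating set. -/

import Mathlib

open SimpleGraph

/-- `S` is a double dominating set of `G`: every vertex has at least two
vertices of its closed neighborhood in `S`. -/
def IsDoubleDomSet {V : Type*} [Fintype V] [DecidableEq V]
    (G : SimpleGraph V) [DecidableRel G.Adj] (S : Finset V) : Prop :=
  ∀ v : V, 2 ≤ (S ∩ insert v (G.neighborFinset v)).card

/-- The double domination number `γ×2(G)`. -/
noncomputable def doubleDomNum {V : Type*} [Fintype V] [DecidableEq V]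
    (G : SimpleGraph V) [DecidableRel G.Adj] : ℕ :=
  sInf {k | ∃ S : Finset V, IsDoubleDomSet G S ∧ S.card = k}

/-- `H` is a minor of `G`. -/
def HasMinor {V W : Type*} (G : SimpleGraph V) (H : SimpleGraph W) : Prop :=
  ∃ f : W → Set V,
    (∀ w, (f w).Nonempty) ∧
    (∀ w, (G.induce (f w)).Connected) ∧
    (Pairwise fun w₁ w₂ => Disjoint (f w₁) (f w₂)) ∧
    ∀ ⦃w₁ w₂⦄, H.Adj w₁ w₂ → ∃ a ∈ f w₁, ∃ b ∈ f w₂, G.Adj a b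

/-- A graph is outerplanar iff it has no `K₄` minor and no `K_{2,3}` minor. -/
def Outerplanar {V : Type*} (G : SimpleGraph V) : Prop :=
  ¬ HasMinor G (⊤ : SimpleGraph (Fin 4)) ∧
  ¬ HasMinor G (completeBipartiteGraph (Fin 2) (Fin 3))

/-- Maximal outerplanar: outerplanar, and adding any missing edge destroys
outerplanarity. -/
def MaximalOuterplanar {V : Type*} (G : SimpleGraph V) : Prop :=
  Outerplanar G ∧
  ∀ u v : V, u ≠ v → ¬ G.Adj u v →
    ¬ Outerplanar (G ⊔ SimpleGraph.fromEdgeSet {s(u, v)})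

/-- `T` is an internal triangle of `G`: a triangle none of whose edges lies
on any Hamiltonian cycle (for a maximal outerplanar graph on `≥ 4` vertices
the Hamiltonian cycle, i.e. the boundary of the outer face, is unique). -/
def IsInternalTriangle {V : Type*} [DecidableEq V] (G : SimpleGraph V) (T : Finset V) : Prop :=
  ∃ a b c : V, T = {a, b, c} ∧ a ≠ b ∧ a ≠ c ∧ b ≠ c ∧
    G.Adj a b ∧ G.Adj a c ∧ G.Adj b c ∧
    ∀ ⦃v : V⦄ (p : G.Walk v v), p.IsHamiltonianCycle →
      s(a, b) ∉ p.edges ∧ s(a, c) ∉ p.edges ∧ s(b, c) ∉ p.edges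

/-- `IsTwoTreeOn G s`: the induced subgraph of `G` on `s` is a 2-tree,
built from a triangle by repeatedly adding a vertex joined exactly to the
two endpoints of an existing edge. -/
inductive IsTwoTreeOn {V : Type*} [DecidableEq V] (G : SimpleGraph V) :
    Finset V → Prop
  | triangle {a b c : V} : a ≠ b → a ≠ c → b ≠ c →
      G.Adj a b → G.Adj a c → G.Adj b c → IsTwoTreeOn G {a, b, c}
  | grow {s : Finset V} {x y v : V} : IsTwoTreeOn G s → x ∈ s → y ∈ s →
      G.Adj x y → v ∉ s → (∀ u ∈ s, G.Adj v u ↔ u = x ∨ u = y) →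
      IsTwoTreeOn G (insert v s)

/-- `G` is a 2-tree (equivalently, a maximal `K₄`-minor-free graph). -/
def IsTwoTree {V : Type*} [Fintype V] [DecidableEq V] (G : SimpleGraph V) : Prop :=
  IsTwoTreeOn G Finset.univ


lemma exists_third : ∀ a b : Fin 3, ∃ k : Fin 3, k ≠ a ∧ k ≠ b := by decide

lemma mem3 : ∀ a b c i : Fin 3, a ≠ b → a ≠ c → b ≠ c → i = a ∨ i = b ∨ i = c := by decide

lemma twoTreeOn_coloring {V : Type*} [DecidableEq V] {G : SimpleGraph V} {s : Finset V}
    (h : IsTwoTreeOn G s) :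
    ∃ c : V → Fin 3, ∀ u ∈ s, ∀ v ∈ s, G.Adj u v → c u ≠ c v := by
  induction h with
  | @triangle a b c hab hac hbc h1 h2 h3 =>
    refine ⟨fun v => if v = a then 0 else if v = b then 1 else 2, ?_⟩
    intro u hu v hv huv
    simp only [Finset.mem_insert, Finset.mem_singleton] at hu hv
    rcases hu with rfl|rfl|rfl <;> rcases hv with rfl|rfl|rfl <;>
      simp_all [hab.symm, hac.symm, hbc.symm]
  | @grow s x y v hs hx hy hxy hv hadj ih =>
    obtain ⟨c, hc⟩ := ih
    obtain ⟨k, hk1, hk2⟩ := exists_third (c x) (c y)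
    refine ⟨Function.update c v k, ?_⟩
    intro u hu w hw huw
    rcases Finset.mem_insert.mp hu with rfl|hu2
    · rcases Finset.mem_insert.mp hw with rfl|hw2
      · exact absurd huw (G.loopless.irrefl _)
      · have hwv : w ≠ u := fun h => hv (h ▸ hw2)
        rw [Function.update_self, Function.update_of_ne hwv]
        rcases (hadj w hw2).mp huw with rfl|rfl
        · exact hk1
        · exact hk2
    · rcases Finset.mem_insert.mp hw with rfl|hw2
      · have huv : u ≠ w := fun h => hv (h ▸ hu2)
        rw [Function.update_of_ne huv, Function.update_self]
        rcases (hadj u hu2).mp huw.symm with rfl|rfl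
        · exact fun h => hk1 h.symm
        · exact fun h => hk2 h.symm
      · have h1 : u ≠ v := fun h => hv (h ▸ hu2)
        have h2 : w ≠ v := fun h => hv (h ▸ hw2)
        rw [Function.update_of_ne h1, Function.update_of_ne h2]
        exact hc u hu2 w hw2 huw

lemma twoTreeOn_tri {V : Type*} [DecidableEq V] {G : SimpleGraph V} {s : Finset V}
    (h : IsTwoTreeOn G s) :
    ∀ v ∈ s, ∃ x y, G.Adj v x ∧ G.Adj v y ∧ G.Adj x y := by
  induction h with
  | @triangle a b c hab hac hbc h1 h2 h3 =>
    intro v hv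
    simp only [Finset.mem_insert, Finset.mem_singleton] at hv
    rcases hv with rfl|rfl|rfl
    · exact ⟨b, c, h1, h2, h3⟩
    · exact ⟨a, c, h1.symm, h3, h2⟩
    · exact ⟨a, b, h2.symm, h3.symm, h1⟩
  | @grow s x y w hs hx hy hxy hw hadj ih =>
    intro v hv
    rcases Finset.mem_insert.mp hv with rfl|hv
    · exact ⟨x, y, (hadj x hx).mpr (Or.inl rfl), (hadj y hy).mpr (Or.inr rfl), hxy⟩
    · exact ih v hv

/-- Every 2-tree on `n ≥ 3` vertices has a proper 3-coloring;
for any such coloring some two color classes together have at most `⌊2n/3⌋`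
vertices, and the union of any two color classes is a double dominating set. -/
theorem twoTree_threeColoring_doubleDom {V : Type*} [Fintype V] [DecidableEq V]
    (G : SimpleGraph V) [DecidableRel G.Adj] (h : IsTwoTree G)
    (hn : 3 ≤ Fintype.card V) :
    (∃ c : V → Fin 3, ∀ u v : V, G.Adj u v → c u ≠ c v) ∧
    ∀ c : V → Fin 3, (∀ u v : V, G.Adj u v → c u ≠ c v) →
      (∃ i j : Fin 3, i ≠ j ∧
        (Finset.univ.filter fun v => c v = i ∨ c v = j).card ≤
          2 * Fintype.card V / 3) ∧
      ∀ i j : Fin 3, i ≠ j →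
        IsDoubleDomSet G (Finset.univ.filter fun v => c v = i ∨ c v = j) := by
  constructor
  · obtain ⟨c, hc⟩ := twoTreeOn_coloring h
    exact ⟨c, fun u v huv => hc u (Finset.mem_univ u) v (Finset.mem_univ v) huv⟩
  intro c hc
  constructor
  · have hsum : ∑ i : Fin 3, (Finset.univ.filter fun v => c v = i).card = Fintype.card V := by
      rw [← Finset.card_univ,
        Finset.card_eq_sum_card_fiberwise (fun v _ => Finset.mem_univ (c v))]
    have hpair : ∀ i j : Fin 3, i ≠ j →
        (Finset.univ.filter fun v => c v = i ∨ c v = j).card =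
          (Finset.univ.filter fun v => c v = i).card +
          (Finset.univ.filter fun v => c v = j).card := by
      intro i j hij
      rw [Finset.filter_or, Finset.card_union_of_disjoint]
      rw [Finset.disjoint_left]
      intro a ha hb
      exact hij ((Finset.mem_filter.mp ha).2.symm.trans (Finset.mem_filter.mp hb).2)
    have h01 := hpair 0 1 (by decide)
    have h02 := hpair 0 2 (by decide)
    have h12 := hpair 1 2 (by decide)
    rw [Fin.sum_univ_three] at hsum
    rcases show (Finset.univ.filter fun v => c v = 0).card +
        (Finset.univ.filter fun v => c v = 1).card ≤ 2 * Fintype.card V / 3 ∨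
        (Finset.univ.filter fun v => c v = 0).card +
        (Finset.univ.filter fun v => c v = 2).card ≤ 2 * Fintype.card V / 3 ∨
        (Finset.univ.filter fun v => c v = 1).card +
        (Finset.univ.filter fun v => c v = 2).card ≤ 2 * Fintype.card V / 3 from by omega
      with hle|hle|hle
    · exact ⟨0, 1, by decide, h01 ▸ hle⟩
    · exact ⟨0, 2, by decide, h02 ▸ hle⟩
    · exact ⟨1, 2, by decide, h12 ▸ hle⟩
  intro i j hij v
  obtain ⟨x, y, hvx, hvy, hxy⟩ := twoTreeOn_tri h v (Finset.mem_univ v)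
  have key : ∀ p q : V, p ≠ q → (p = v ∨ G.Adj v p) → (q = v ∨ G.Adj v q) →
      (c p = i ∨ c p = j) → (c q = i ∨ c q = j) →
      2 ≤ ((Finset.univ.filter fun w => c w = i ∨ c w = j) ∩
        insert v (G.neighborFinset v)).card := by
    intro p q hpq hp hq hcp hcq
    have hmem : ∀ r : V, (r = v ∨ G.Adj v r) → (c r = i ∨ c r = j) →
        r ∈ (Finset.univ.filter fun w => c w = i ∨ c w = j) ∩
          insert v (G.neighborFinset v) := by
      intro r hr hcr
      refine Finset.mem_inter.mpr ⟨Finset.mem_filter.mpr ⟨Finset.mem_univ r, hcr⟩, ?_⟩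
      rcases hr with rfl|hr
      · exact Finset.mem_insert_self _ _
      · exact Finset.mem_insert_of_mem ((G.mem_neighborFinset v r).mpr hr)
    exact Finset.one_lt_card.mpr ⟨p, hmem p hp hcp, q, hmem q hq hcq, hpq⟩
  have d1 : c v ≠ c x := hc v x hvx
  have d2 : c v ≠ c y := hc v y hvy
  have d3 : c x ≠ c y := hc x y hxy
  have hi := mem3 (c v) (c x) (c y) i d1 d2 d3
  have hj := mem3 (c v) (c x) (c y) j d1 d2 d3
  rcases hi with hi|hi|hi <;> rcases hj with hj|hj|hj
  · exact absurd (hi.trans hj.symm) hij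
  · exact key v x hvx.ne (Or.inl rfl) (Or.inr hvx) (Or.inl hi.symm) (Or.inr hj.symm)
  · exact key v y hvy.ne (Or.inl rfl) (Or.inr hvy) (Or.inl hi.symm) (Or.inr hj.symm)
  · exact key x v hvx.ne' (Or.inr hvx) (Or.inl rfl) (Or.inl hi.symm) (Or.inr hj.symm)
  · exact absurd (hi.trans hj.symm) hij
  · exact key x y hxy.ne (Or.inr hvx) (Or.inr hvy) (Or.inl hi.symm) (Or.inr hj.symm)
  · exact key y v hvy.ne' (Or.inr hvy) (Or.inl rfl) (Or.inl hi.symm) (Or.inr hj.symm)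
  · exact key y x hxy.ne' (Or.inr hvy) (Or.inr hvx) (Or.inl hi.symm) (Or.inr hj.symm)
  · exact absurd (hi.trans hj.symm) hij
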